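/- Assume β > 0 satisfies 2βe^{−2τ} − 4τ − β ≥ 0. Then for every solution of the delayed Cucker–Smale system and almost every t > 2τ, the functional G is differentiable at t and satisfies (d/dt) G(t) ≤ 4∫_{t−τ}^{t} G(s−τ) ds − (N−1)·a̲(t)·G(t) + β(1 − e^{−2τ})·G(t−τ). -/

import Mathlib

open scoped BigOperators
open MeasureTheory
open scoped RealInnerProductSpace

/-- Diameter of a configuration `w` at time `t` (used for positions and velocities). -/
noncomputable def csDiam {N d : ℕ} (w : Fin N → ℝ → EuclideanSpace ℝ (Fin d)) (t : ℝ) : ℝ :=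
  ⨆ i : Fin N, ⨆ j : Fin N, ‖w i t - w j t‖

/-- Maximum of the norms of `w' i t` over the agents `i`. -/
noncomputable def csMaxDer {N d : ℕ} (w' : Fin N → ℝ → EuclideanSpace ℝ (Fin d)) (t : ℝ) : ℝ :=
  ⨆ i : Fin N, ‖w' i t‖

/-- Lyapunov–Krasovskii functional
`G(t) = d_v(t) + β ∫_{max(0,t-2τ)}^t e^{-(t-s)} ∫_s^t max_i |v̇_i(r)| dr ds`. -/
noncomputable def csG {N d : ℕ} (β τ : ℝ)
    (v v' : Fin N → ℝ → EuclideanSpace ℝ (Fin d)) (t : ℝ) : ℝ :=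
  csDiam v t +
    β * ∫ s in (max 0 (t - 2 * τ))..t, Real.exp (-(t - s)) * ∫ r in s..t, csMaxDer v' r

/-- Minimal communication rate `a̲(t) = min_{i ≠ j} ψ(|x_i(t-σ) - x_j(t-τ)|)/(N-1)`. -/
noncomputable def csAMin {N d : ℕ} (ψ : ℝ → ℝ) (σ τ : ℝ)
    (x : Fin N → ℝ → EuclideanSpace ℝ (Fin d)) (t : ℝ) : ℝ :=
  ⨅ p : {p : Fin N × Fin N // p.1 ≠ p.2},
    ψ ‖x p.val.1 (t - σ) - x p.val.2 (t - τ)‖ / (N - 1)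

set_option linter.unusedSectionVars false
set_option linter.unusedVariables false

section Aux

variable {N d : ℕ} [NeZero N]

lemma fin_ciSup_le {f : Fin N → ℝ} {c : ℝ} (h : ∀ i, f i ≤ c) : (⨆ i, f i) ≤ c :=
  ciSup_le h

lemma fin_le_ciSup (f : Fin N → ℝ) (i : Fin N) : f i ≤ ⨆ i, f i :=
  le_ciSup (Set.Finite.bddAbove (Set.finite_range f)) i

lemma fin_ciSup_attain (f : Fin N → ℝ) : ∃ i, (⨆ j, f j) = f i := by
  obtain ⟨i, hi⟩ := Finite.exists_max f
  exact ⟨i, le_antisymm (ciSup_le hi) (fin_le_ciSup f i)⟩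

lemma csDiam_le {v : Fin N → ℝ → EuclideanSpace ℝ (Fin d)} {t : ℝ} {c : ℝ}
    (h : ∀ i j, ‖v i t - v j t‖ ≤ c) : csDiam v t ≤ c :=
  ciSup_le fun i => ciSup_le (h i)

lemma le_csDiam (v : Fin N → ℝ → EuclideanSpace ℝ (Fin d)) (t : ℝ) (i j : Fin N) :
    ‖v i t - v j t‖ ≤ csDiam v t :=
  (fin_le_ciSup _ j).trans (fin_le_ciSup (fun i => ⨆ j, ‖v i t - v j t‖) i)

lemma csDiam_nonneg (v : Fin N → ℝ → EuclideanSpace ℝ (Fin d)) (t : ℝ) :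
    0 ≤ csDiam v t := by
  have i0 : Fin N := Classical.arbitrary _
  simpa using le_csDiam v t i0 i0

lemma csDiam_attain (v : Fin N → ℝ → EuclideanSpace ℝ (Fin d)) (t : ℝ) :
    ∃ p q, csDiam v t = ‖v p t - v q t‖ := by
  obtain ⟨p, hp⟩ := fin_ciSup_attain (fun i => ⨆ j, ‖v i t - v j t‖)
  obtain ⟨q, hq⟩ := fin_ciSup_attain (fun j => ‖v p t - v j t‖)
  exact ⟨p, q, hp.trans hq⟩

/-- continuity of a finite sup -/
lemma continuous_fin_ciSup {g : Fin N → ℝ → ℝ} (hg : ∀ i, Continuous (g i)) :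
    Continuous (fun r => ⨆ i, g i r) := by
  have : (fun r => ⨆ i, g i r)
      = fun r => Finset.univ.sup' Finset.univ_nonempty (fun i => g i r) := by
    funext r
    rw [Finset.sup'_univ_eq_ciSup]
  rw [this]
  rw [continuous_iff_continuousAt]
  intro r
  exact ContinuousAt.finset_sup'_apply Finset.univ_nonempty fun i _ => (hg i).continuousAt

lemma continuousOn_fin_ciSup {g : Fin N → ℝ → ℝ} {s : Set ℝ}
    (hg : ∀ i, ContinuousOn (g i) s) :
    ContinuousOn (fun r => ⨆ i, g i r) s := by
  have : (fun r => ⨆ i, g i r)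
      = fun r => Finset.univ.sup' Finset.univ_nonempty (fun i => g i r) := by
    funext r
    rw [Finset.sup'_univ_eq_ciSup]
  rw [this]
  intro r hr
  have := ContinuousWithinAt.finset_sup'_apply (f := fun i a => g i a) (s := Finset.univ)
    (Finset.univ_nonempty) (fun i _ => (hg i r hr))
  exact this

end Aux
set_option linter.unusedSectionVars false

section Defs

variable {N d : ℕ}

noncomputable def csE (ψ : ℝ → ℝ) (σ τ : ℝ) (x v : Fin N → ℝ → EuclideanSpace ℝ (Fin d))
    (i : Fin N) (r : ℝ) : EuclideanSpace ℝ (Fin d) :=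
  ∑ j ∈ Finset.univ.erase i,
    (ψ ‖x i (max r 0 - σ) - x j (max r 0 - τ)‖ / ((N : ℝ) - 1)) •
      (v j (max r 0 - τ) - v i (max r 0 - σ))

noncomputable def csM (ψ : ℝ → ℝ) (σ τ : ℝ) (x v : Fin N → ℝ → EuclideanSpace ℝ (Fin d))
    (r : ℝ) : ℝ :=
  ⨆ i, ‖csE ψ σ τ x v i r‖

noncomputable def csW (ψ : ℝ → ℝ) (σ τ : ℝ) (x v : Fin N → ℝ → EuclideanSpace ℝ (Fin d))
    (y : ℝ) : ℝ :=
  ∫ r in (0:ℝ)..y, csM ψ σ τ x v r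

noncomputable def csH (ψ : ℝ → ℝ) (σ τ : ℝ) (x v : Fin N → ℝ → EuclideanSpace ℝ (Fin d))
    (y : ℝ) : ℝ :=
  ∫ s in (0:ℝ)..y, Real.exp s * csW ψ σ τ x v s

variable [NeZero N]
variable {ψ : ℝ → ℝ} {σ τ : ℝ} {x v : Fin N → ℝ → EuclideanSpace ℝ (Fin d)}
variable (hσ : 0 ≤ σ) (hστ : σ ≤ τ) (hτ : 0 < τ)
variable (hψcont : ContinuousOn ψ (Set.Ici 0))
variable (hxc : ∀ i, ContinuousOn (x i) (Set.Ici (-τ)))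
variable (hvc : ∀ i, ContinuousOn (v i) (Set.Ici (-τ)))

include hσ hστ hτ hψcont hxc hvc

omit hσ hστ hτ hψcont hxc hvc in
lemma cont_shift (hστ : σ ≤ τ) (hσ : 0 ≤ σ)
    (hwc : ∀ i, ContinuousOn (v i) (Set.Ici (-τ))) (i : Fin N) (c : ℝ) (hc : c ≤ τ)
    (hc0 : 0 ≤ c) :
    Continuous (fun r : ℝ => v i (max r 0 - c)) := by
  apply (hwc i).comp_continuous
  · exact (continuous_max.comp (continuous_id.prodMk continuous_const)).sub continuous_const
  · intro r
    simp only [Set.mem_Ici]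
    have : (0:ℝ) ≤ max r 0 := le_max_right _ _
    linarith

lemma csE_cont (i : Fin N) : Continuous (csE ψ σ τ x v i) := by
  unfold csE
  apply continuous_finset_sum
  intro j _
  apply Continuous.fun_smul
  · apply Continuous.div_const
    apply hψcont.comp_continuous
    · exact ((cont_shift hστ hσ hxc i σ hστ hσ).sub
        (cont_shift hστ hσ hxc j τ le_rfl hτ.le)).norm
    · intro r; exact norm_nonneg _
  · exact (cont_shift hστ hσ hvc j τ le_rfl hτ.le).sub (cont_shift hστ hσ hvc i σ hστ hσ)

lemma csM_cont : Continuous (csM ψ σ τ x v) := by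
  unfold csM
  exact continuous_fin_ciSup fun i => (csE_cont hσ hστ hτ hψcont hxc hvc i).norm

omit hσ hστ hτ hψcont hxc hvc in
lemma csM_nonneg (r : ℝ) : 0 ≤ csM ψ σ τ x v r := by
  have i0 : Fin N := Classical.arbitrary _
  exact (norm_nonneg _).trans (fin_le_ciSup (fun i => ‖csE ψ σ τ x v i r‖) i0)

omit hσ hστ hτ hψcont hxc hvc in
lemma norm_le_csM (i : Fin N) (r : ℝ) : ‖csE ψ σ τ x v i r‖ ≤ csM ψ σ τ x v r :=
  fin_le_ciSup (fun i => ‖csE ψ σ τ x v i r‖) i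

lemma csW_hasDeriv (y : ℝ) :
    HasDerivAt (csW ψ σ τ x v) (csM ψ σ τ x v y) y :=
  ((csM_cont hσ hστ hτ hψcont hxc hvc).integral_hasStrictDerivAt 0 y).hasDerivAt

lemma csW_cont : Continuous (csW ψ σ τ x v) := by
  rw [continuous_iff_continuousAt]
  exact fun y => (csW_hasDeriv hσ hστ hτ hψcont hxc hvc y).continuousAt

lemma csW_sub {a b : ℝ} :
    (∫ r in a..b, csM ψ σ τ x v r) = csW ψ σ τ x v b - csW ψ σ τ x v a := by
  unfold csW
  rw [← intervalIntegral.integral_interval_sub_left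
    ((csM_cont hσ hστ hτ hψcont hxc hvc).intervalIntegrable 0 b)
    ((csM_cont hσ hστ hτ hψcont hxc hvc).intervalIntegrable 0 a)]

lemma csW_mono {a b : ℝ} (hab : a ≤ b) : csW ψ σ τ x v a ≤ csW ψ σ τ x v b := by
  have h := csW_sub (a := a) (b := b) hσ hστ hτ hψcont hxc hvc
  have h2 : 0 ≤ ∫ r in a..b, csM ψ σ τ x v r :=
    intervalIntegral.integral_nonneg hab fun u _ => csM_nonneg u
  linarith

lemma csH_hasDeriv (y : ℝ) :
    HasDerivAt (csH ψ σ τ x v) (Real.exp y * csW ψ σ τ x v y) y :=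
  ((Real.continuous_exp.mul (csW_cont hσ hστ hτ hψcont hxc hvc)).integral_hasStrictDerivAt
    0 y).hasDerivAt

lemma csH_sub {a b : ℝ} :
    (∫ s in a..b, Real.exp s * csW ψ σ τ x v s) = csH ψ σ τ x v b - csH ψ σ τ x v a := by
  unfold csH
  rw [← intervalIntegral.integral_interval_sub_left
    ((Real.continuous_exp.fun_mul (csW_cont hσ hστ hτ hψcont hxc hvc)).intervalIntegrable 0 b)
    ((Real.continuous_exp.fun_mul (csW_cont hσ hστ hτ hψcont hxc hvc)).intervalIntegrable 0 a)]

omit hσ hστ hτ hψcont hxc in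
lemma csDiam_contOn : ContinuousOn (csDiam v) (Set.Ici (-τ)) := by
  unfold csDiam
  apply continuousOn_fin_ciSup
  intro i
  apply continuousOn_fin_ciSup
  intro j
  exact ((hvc i).sub (hvc j)).norm

end Defs

section Main

variable {N d : ℕ} [NeZero N]
variable {ψ : ℝ → ℝ} {σ τ β : ℝ} {x v v' : Fin N → ℝ → EuclideanSpace ℝ (Fin d)}
variable (hσ : 0 ≤ σ) (hστ : σ ≤ τ) (hτ : 0 < τ)
variable (hψcont : ContinuousOn ψ (Set.Ici 0))
variable (hxc : ∀ i, ContinuousOn (x i) (Set.Ici (-τ)))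
variable (hvc : ∀ i, ContinuousOn (v i) (Set.Ici (-τ)))

include hσ hστ hτ hψcont hxc hvc

/-- The exponential part of `G`, in closed form. -/
noncomputable def csFe (ψ : ℝ → ℝ) (σ τ β : ℝ) (x v : Fin N → ℝ → EuclideanSpace ℝ (Fin d))
    (u : ℝ) : ℝ :=
  β * (csW ψ σ τ x v u * (1 - Real.exp (max 0 (u - 2*τ) - u)) -
    Real.exp (-u) * (csH ψ σ τ x v u - csH ψ σ τ x v (max 0 (u - 2*τ))))

lemma csFmid_eq {m u : ℝ} :
    (∫ s in m..u, (Real.exp (-u) * Real.exp s) * (csW ψ σ τ x v u - csW ψ σ τ x v s))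
      = csW ψ σ τ x v u * (Real.exp 0 - Real.exp (m - u)) -
        Real.exp (-u) * (csH ψ σ τ x v u - csH ψ σ τ x v m) := by
  have hWc := csW_cont hσ hστ hτ hψcont hxc hvc
  have h1 : ∀ s : ℝ, (Real.exp (-u) * Real.exp s) * (csW ψ σ τ x v u - csW ψ σ τ x v s)
      = Real.exp (-u) * (csW ψ σ τ x v u * Real.exp s - Real.exp s * csW ψ σ τ x v s) := by
    intro s; ring
  rw [intervalIntegral.integral_congr (g := fun s => Real.exp (-u) *
      (csW ψ σ τ x v u * Real.exp s - Real.exp s * csW ψ σ τ x v s)) (fun s _ => h1 s)]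
  rw [intervalIntegral.integral_const_mul]
  rw [intervalIntegral.integral_sub
    ((continuous_const.fun_mul Real.continuous_exp).intervalIntegrable m u)
    ((Real.continuous_exp.fun_mul hWc).intervalIntegrable m u)]
  rw [intervalIntegral.integral_const_mul, integral_exp,
    csH_sub hσ hστ hτ hψcont hxc hvc]
  have e1 : Real.exp (-u) * Real.exp u = Real.exp 0 := by
    rw [← Real.exp_add]; ring_nf
  have e2 : Real.exp (-u) * Real.exp m = Real.exp (m - u) := by
    rw [← Real.exp_add]; ring_nf
  linear_combination (csW ψ σ τ x v u) * e1 - (csW ψ σ τ x v u) * e2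

lemma csG_eq (hode : ∀ i, ∀ t > (0:ℝ),
      v' i t = ∑ j ∈ Finset.univ.erase i,
        (ψ ‖x i (t - σ) - x j (t - τ)‖ / ((N:ℝ) - 1)) • (v j (t - τ) - v i (t - σ)))
    {u : ℝ} (hu : 0 ≤ u) :
    csG β τ v v' u = csDiam v u + csFe ψ σ τ β x v u := by
  have hMc := csM_cont hσ hστ hτ hψcont hxc hvc
  set m := max 0 (u - 2*τ) with hm
  have hm0 : 0 ≤ m := le_max_left _ _
  have hmu : m ≤ u := max_le hu (by linarith)
  have hMeq : ∀ r : ℝ, 0 < r → csMaxDer v' r = csM ψ σ τ x v r := by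
    intro r hr
    unfold csMaxDer csM csE
    congr 1
    funext i
    rw [hode i r hr]
    rw [max_eq_left hr.le]
  have hinner : ∀ s ∈ Set.Icc m u,
      (∫ r in s..u, csMaxDer v' r) = csW ψ σ τ x v u - csW ψ σ τ x v s := by
    intro s hs
    rw [← csW_sub hσ hστ hτ hψcont hxc hvc]
    apply intervalIntegral.integral_congr_ae
    apply Filter.Eventually.of_forall
    intro r hmem
    rw [Set.uIoc_of_le hs.2] at hmem
    exact hMeq r (lt_of_le_of_lt (hm0.trans hs.1) hmem.1)
  unfold csG
  rw [← hm]
  congr 1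
  have houter : (∫ s in m..u, Real.exp (-(u - s)) * ∫ r in s..u, csMaxDer v' r)
      = ∫ s in m..u, (Real.exp (-u) * Real.exp s) * (csW ψ σ τ x v u - csW ψ σ τ x v s) := by
    apply intervalIntegral.integral_congr
    intro s hs
    rw [Set.uIcc_of_le hmu] at hs
    simp only
    rw [hinner s hs]
    congr 1
    rw [← Real.exp_add]
    ring_nf
  rw [houter, csFmid_eq hσ hστ hτ hψcont hxc hvc]
  unfold csFe
  rw [← hm, Real.exp_zero]

lemma csFe_nonneg (hβ : 0 ≤ β) {u : ℝ} (hu : 0 ≤ u) : 0 ≤ csFe ψ σ τ β x v u := by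
  set m := max 0 (u - 2*τ) with hm
  have hm0 : 0 ≤ m := le_max_left _ _
  have hmu : m ≤ u := max_le hu (by linarith)
  have h := csFmid_eq (m := m) (u := u) hσ hστ hτ hψcont hxc hvc
  unfold csFe
  rw [← hm]
  have h' : csW ψ σ τ x v u * (1 - Real.exp (m - u)) -
      Real.exp (-u) * (csH ψ σ τ x v u - csH ψ σ τ x v m)
      = ∫ s in m..u, (Real.exp (-u) * Real.exp s) * (csW ψ σ τ x v u - csW ψ σ τ x v s) := by
    rw [h, Real.exp_zero]
  apply mul_nonneg hβ
  rw [h']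
  apply intervalIntegral.integral_nonneg hmu
  intro s hs
  have h1 : csW ψ σ τ x v s ≤ csW ψ σ τ x v u := csW_mono hσ hστ hτ hψcont hxc hvc hs.2
  exact mul_nonneg (mul_nonneg (Real.exp_pos _).le (Real.exp_pos _).le) (by linarith)

lemma csFe_cont : Continuous (csFe ψ σ τ β (x := x) v) := by
  have hWc := csW_cont hσ hστ hτ hψcont hxc hvc
  have hHc : Continuous (csH ψ σ τ x v) := by
    rw [continuous_iff_continuousAt]
    exact fun y => (csH_hasDeriv hσ hστ hτ hψcont hxc hvc y).continuousAt
  unfold csFe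
  have hmaxc : Continuous fun u : ℝ => max 0 (u - 2*τ) :=
    continuous_const.max (continuous_id.sub continuous_const)
  fun_prop

/-- Fundamental-theorem estimate for velocities. -/
lemma ftc_v (hvder : ∀ i, ∀ t > (0:ℝ), HasDerivAt (v i) (v' i t) t)
    (hode : ∀ i, ∀ t > (0:ℝ),
      v' i t = ∑ j ∈ Finset.univ.erase i,
        (ψ ‖x i (t - σ) - x j (t - τ)‖ / ((N:ℝ) - 1)) • (v j (t - τ) - v i (t - σ)))
    {a b : ℝ} (ha : 0 < a) (hab : a ≤ b) (i : Fin N) :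
    ‖v i b - v i a‖ ≤ csW ψ σ τ x v b - csW ψ σ τ x v a := by
  have hveq : ∀ r ∈ Set.uIcc a b, v' i r = csE ψ σ τ x v i r := by
    intro r hr
    rw [Set.uIcc_of_le hab] at hr
    have hr0 : 0 < r := lt_of_lt_of_le ha hr.1
    rw [hode i r hr0]
    unfold csE
    rw [max_eq_left hr0.le]
  have hcont : ContinuousOn (v' i) (Set.uIcc a b) :=
    ((csE_cont hσ hστ hτ hψcont hxc hvc i).continuousOn).congr hveq
  have hint : IntervalIntegrable (v' i) volume a b := hcont.intervalIntegrable
  have heq : (∫ r in a..b, v' i r) = v i b - v i a := by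
    apply intervalIntegral.integral_eq_sub_of_hasDerivAt
    · intro r hr
      rw [Set.uIcc_of_le hab] at hr
      exact hvder i r (lt_of_lt_of_le ha hr.1)
    · exact hint
  rw [← heq]
  calc ‖∫ r in a..b, v' i r‖ ≤ ∫ r in a..b, ‖v' i r‖ :=
        intervalIntegral.norm_integral_le_integral_norm hab
    _ ≤ ∫ r in a..b, csM ψ σ τ x v r := by
        apply intervalIntegral.integral_mono_on hab (hcont.norm.intervalIntegrable)
          ((csM_cont hσ hστ hτ hψcont hxc hvc).intervalIntegrable a b)
        intro r hr
        rw [hveq r (by rwa [Set.uIcc_of_le hab])]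
        exact norm_le_csM i r
    _ = csW ψ σ τ x v b - csW ψ σ τ x v a := csW_sub hσ hστ hτ hψcont hxc hvc

end Main

section Main2
set_option maxHeartbeats 1000000

variable {N d : ℕ} [NeZero N]
variable {ψ : ℝ → ℝ} {σ τ β : ℝ} {x v v' : Fin N → ℝ → EuclideanSpace ℝ (Fin d)}
variable (hN : 2 ≤ N)
variable (hσ : 0 ≤ σ) (hστ : σ ≤ τ) (hτ : 0 < τ)
variable (hψpos : ∀ s, 0 ≤ s → 0 < ψ s)
variable (hψcont : ContinuousOn ψ (Set.Ici 0))
variable (hψbdd : ∀ s, 0 ≤ s → ψ s ≤ 1)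
variable (hxc : ∀ i, ContinuousOn (x i) (Set.Ici (-τ)))
variable (hvc : ∀ i, ContinuousOn (v i) (Set.Ici (-τ)))
variable (hvder : ∀ i, ∀ t > (0:ℝ), HasDerivAt (v i) (v' i t) t)
variable (hode : ∀ i, ∀ t > (0:ℝ),
      v' i t = ∑ j ∈ Finset.univ.erase i,
        (ψ ‖x i (t - σ) - x j (t - τ)‖ / ((N:ℝ) - 1)) • (v j (t - τ) - v i (t - σ)))

include hN

lemma hN1 : (1:ℝ) ≤ (N:ℝ) - 1 := by
  have : (2:ℝ) ≤ (N:ℝ) := by exact_mod_cast hN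
  linarith

include hψpos hψbdd in
lemma coeff_mem (i j : Fin N) (a b : ℝ) :
    0 ≤ ψ ‖x i a - x j b‖ / ((N:ℝ) - 1) ∧
      ψ ‖x i a - x j b‖ / ((N:ℝ) - 1) ≤ 1 / ((N:ℝ) - 1) := by
  have h1 := hN1 hN
  constructor
  · exact div_nonneg (hψpos _ (norm_nonneg _)).le (by linarith)
  · apply div_le_div_of_nonneg_right ?_ ?_ |>.trans le_rfl
    · exact hψbdd _ (norm_nonneg _)
    · linarith

include hψpos hψbdd in
lemma coeff_sum_le_one (i : Fin N) (a : ℝ) (b : Fin N → ℝ) :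
    ∑ j ∈ Finset.univ.erase i, ψ ‖x i a - x j (b j)‖ / ((N:ℝ) - 1) ≤ 1 := by
  have h1 := hN1 hN
  calc ∑ j ∈ Finset.univ.erase i, ψ ‖x i a - x j (b j)‖ / ((N:ℝ) - 1)
      ≤ ∑ _j ∈ Finset.univ.erase i, 1 / ((N:ℝ) - 1) := by
        apply Finset.sum_le_sum
        intro j _
        exact (coeff_mem hN hψpos hψbdd i j a (b j)).2
    _ = ((N:ℝ) - 1) * (1 / ((N:ℝ) - 1)) := by
        rw [Finset.sum_const, Finset.card_erase_of_mem (Finset.mem_univ i), Finset.card_univ,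
          Fintype.card_fin]
        have : ((N - 1 : ℕ) : ℝ) = (N:ℝ) - 1 := by
          have : 1 ≤ N := by omega
          push_cast [this]
          ring
        rw [nsmul_eq_mul, this]
    _ = 1 := by field_simp

include hσ hστ hτ hψpos hψcont hψbdd hxc hvc hvder hode in
lemma csM_le {r : ℝ} (hr : τ < r) :
    csM ψ σ τ x v r ≤ csDiam v (r - τ) + (csW ψ σ τ x v r - csW ψ σ τ x v (r - τ)) := by
  have h1 := hN1 hN
  have hr0 : (0:ℝ) < r := lt_trans hτ hr
  set K := csDiam v (r - τ) + (csW ψ σ τ x v r - csW ψ σ τ x v (r - τ)) with hK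
  have hK0 : 0 ≤ K := by
    have := csDiam_nonneg v (r - τ)
    have := csW_mono hσ hστ hτ hψcont hxc hvc (by linarith : r - τ ≤ r)
    rw [hK]; linarith
  apply fin_ciSup_le
  intro i
  unfold csE
  rw [max_eq_left hr0.le]
  calc ‖∑ j ∈ Finset.univ.erase i,
        (ψ ‖x i (r - σ) - x j (r - τ)‖ / ((N:ℝ) - 1)) • (v j (r - τ) - v i (r - σ))‖
      ≤ ∑ j ∈ Finset.univ.erase i,
        ‖(ψ ‖x i (r - σ) - x j (r - τ)‖ / ((N:ℝ) - 1)) • (v j (r - τ) - v i (r - σ))‖ :=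
        norm_sum_le _ _
    _ ≤ ∑ j ∈ Finset.univ.erase i,
        (ψ ‖x i (r - σ) - x j (r - τ)‖ / ((N:ℝ) - 1)) * K := by
        apply Finset.sum_le_sum
        intro j _
        rw [norm_smul, Real.norm_eq_abs,
          abs_of_nonneg (coeff_mem hN hψpos hψbdd i j (r - σ) (r - τ)).1]
        apply mul_le_mul_of_nonneg_left _ (coeff_mem hN hψpos hψbdd i j (r - σ) (r - τ)).1
        calc ‖v j (r - τ) - v i (r - σ)‖
            ≤ ‖v j (r - τ) - v i (r - τ)‖ + ‖v i (r - τ) - v i (r - σ)‖ := by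
              have : v j (r - τ) - v i (r - σ)
                  = (v j (r - τ) - v i (r - τ)) + (v i (r - τ) - v i (r - σ)) := by abel
              rw [this]; exact norm_add_le _ _
          _ ≤ csDiam v (r - τ) + (csW ψ σ τ x v r - csW ψ σ τ x v (r - τ)) := by
              apply add_le_add (le_csDiam v (r - τ) j i)
              rw [norm_sub_rev]
              calc ‖v i (r - σ) - v i (r - τ)‖
                  ≤ csW ψ σ τ x v (r - σ) - csW ψ σ τ x v (r - τ) :=
                    ftc_v hσ hστ hτ hψcont hxc hvc hvder hode (by linarith) (by linarith) i
                _ ≤ csW ψ σ τ x v r - csW ψ σ τ x v (r - τ) := by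
                    have := csW_mono hσ hστ hτ hψcont hxc hvc (by linarith : r - σ ≤ r)
                    linarith
    _ = (∑ j ∈ Finset.univ.erase i, ψ ‖x i (r - σ) - x j (r - τ)‖ / ((N:ℝ) - 1)) * K :=
        (Finset.sum_mul _ _ _).symm
    _ ≤ 1 * K := by
        apply mul_le_mul_of_nonneg_right _ hK0
        exact coeff_sum_le_one hN hψpos hψbdd i (r - σ) (fun _ => r - τ)
    _ = K := one_mul K

lemma amin_pair : Nonempty {p : Fin N × Fin N // p.1 ≠ p.2} := by
  refine ⟨⟨(⟨0, by omega⟩, ⟨1, by omega⟩), ?_⟩⟩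
  simp [Fin.ext_iff]

include hψpos in
lemma amin_nonneg (t : ℝ) : 0 ≤ csAMin ψ σ τ x t := by
  have h1 := hN1 hN
  haveI := amin_pair (N := N) hN
  unfold csAMin
  apply le_ciInf
  intro p
  exact div_nonneg (hψpos _ (norm_nonneg _)).le (by linarith)

lemma amin_le (t : ℝ) {i j : Fin N} (hij : i ≠ j) :
    csAMin ψ σ τ x t ≤ ψ ‖x i (t - σ) - x j (t - τ)‖ / ((N:ℝ) - 1) := by
  haveI := amin_pair (N := N) hN
  unfold csAMin
  have hb : BddBelow (Set.range (fun p : {p : Fin N × Fin N // p.1 ≠ p.2} =>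
      ψ ‖x p.val.1 (t - σ) - x p.val.2 (t - τ)‖ / ((N:ℝ) - 1))) :=
    Set.Finite.bddBelow (Set.finite_range _)
  exact ciInf_le hb ⟨(i, j), hij⟩

include hψpos hψbdd in
lemma amin_mul_le_one (t : ℝ) : ((N:ℝ) - 1) * csAMin ψ σ τ x t ≤ 1 := by
  have h1 := hN1 hN
  have h2 : csAMin ψ σ τ x t ≤ 1 / ((N:ℝ) - 1) := by
    refine (amin_le hN t (i := ⟨0, by omega⟩) (j := ⟨1, by omega⟩) ?_).trans ?_
    · simp [Fin.ext_iff]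
    · exact (coeff_mem hN hψpos hψbdd _ _ _ _).2
  calc ((N:ℝ) - 1) * csAMin ψ σ τ x t ≤ ((N:ℝ) - 1) * (1 / ((N:ℝ) - 1)) := by
        apply mul_le_mul_of_nonneg_left h2 (by linarith)
    _ = 1 := by field_simp

end Main2

section Main3
set_option maxHeartbeats 1000000

variable {N d : ℕ} [NeZero N]
variable {ψ : ℝ → ℝ} {σ τ β : ℝ} {x v v' : Fin N → ℝ → EuclideanSpace ℝ (Fin d)}
variable (hσ : 0 ≤ σ) (hστ : σ ≤ τ) (hτ : 0 < τ)
variable (hψcont : ContinuousOn ψ (Set.Ici 0))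
variable (hxc : ∀ i, ContinuousOn (x i) (Set.Ici (-τ)))
variable (hvc : ∀ i, ContinuousOn (v i) (Set.Ici (-τ)))
variable (hvder : ∀ i, ∀ t > (0:ℝ), HasDerivAt (v i) (v' i t) t)
variable (hode : ∀ i, ∀ t > (0:ℝ),
      v' i t = ∑ j ∈ Finset.univ.erase i,
        (ψ ‖x i (t - σ) - x j (t - τ)‖ / ((N:ℝ) - 1)) • (v j (t - τ) - v i (t - σ)))

include hσ hστ hτ hψcont hxc hvc hvder hode

lemma vel_lip {c T C : ℝ} (hc : 0 < c) (hC : ∀ r ∈ Set.Icc c T, csM ψ σ τ x v r ≤ C)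
    (i : Fin N) {a b : ℝ} (ha : a ∈ Set.Icc c T) (hb : b ∈ Set.Icc c T) :
    ‖v i b - v i a‖ ≤ C * |b - a| := by
  have key : ∀ a b : ℝ, a ∈ Set.Icc c T → b ∈ Set.Icc c T → a ≤ b →
      ‖v i b - v i a‖ ≤ C * |b - a| := by
    intro a b ha hb hab
    calc ‖v i b - v i a‖ ≤ csW ψ σ τ x v b - csW ψ σ τ x v a :=
          ftc_v hσ hστ hτ hψcont hxc hvc hvder hode (lt_of_lt_of_le hc ha.1) hab i
      _ = ∫ r in a..b, csM ψ σ τ x v r := (csW_sub hσ hστ hτ hψcont hxc hvc).symm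
      _ ≤ ∫ _r in a..b, C := by
          apply intervalIntegral.integral_mono_on hab
            ((csM_cont hσ hστ hτ hψcont hxc hvc).intervalIntegrable a b)
            (intervalIntegrable_const)
          intro r hr
          exact hC r ⟨ha.1.trans hr.1, hr.2.trans hb.2⟩
      _ = C * (b - a) := by rw [intervalIntegral.integral_const, smul_eq_mul]; ring
      _ = C * |b - a| := by rw [abs_of_nonneg (by linarith)]
  rcases le_total a b with hab | hab
  · exact key a b ha hb hab
  · rw [norm_sub_rev, abs_sub_comm]
    exact key b a hb ha hab

lemma dv_lip_onesided {c T C : ℝ} (hc : 0 < c) (hC : ∀ r ∈ Set.Icc c T, csM ψ σ τ x v r ≤ C)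
    {a b : ℝ} (ha : a ∈ Set.Icc c T) (hb : b ∈ Set.Icc c T) :
    csDiam v a ≤ csDiam v b + 2 * C * |a - b| := by
  obtain ⟨p, q, hpq⟩ := csDiam_attain v a
  rw [hpq]
  have h4 := dist_triangle4 (v p a) (v p b) (v q b) (v q a)
  rw [dist_eq_norm, dist_eq_norm, dist_eq_norm, dist_eq_norm] at h4
  have h1 : ‖v p a - v p b‖ ≤ C * |a - b| := by
    rw [norm_sub_rev, abs_sub_comm]
    exact vel_lip hσ hστ hτ hψcont hxc hvc hvder hode hc hC p ha hb
  have h2 : ‖v q b - v q a‖ ≤ C * |b - a| :=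
    vel_lip hσ hστ hτ hψcont hxc hvc hvder hode hc hC q ha hb
  have h3 : ‖v p b - v q b‖ ≤ csDiam v b := le_csDiam v b p q
  rw [abs_sub_comm] at h2
  linarith

lemma dv_ae_diff :
    ∀ᵐ t ∂(volume : Measure ℝ), t ∈ Set.Ioi (2*τ) → DifferentiableAt ℝ (csDiam v) t := by
  have main : ∀ n : ℕ, ∀ᵐ t ∂(volume : Measure ℝ),
      t ∈ Set.Ioo τ (τ + n + 1) → DifferentiableAt ℝ (csDiam v) t := by
    intro n
    set T : ℝ := τ + n + 1 with hT
    have hτT : τ ≤ T := by rw [hT]; have : (0:ℝ) ≤ n := Nat.cast_nonneg n; linarith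
    obtain ⟨C, hC⟩ := (isCompact_Icc (a := τ) (b := T)).exists_bound_of_continuousOn
      (csM_cont hσ hστ hτ hψcont hxc hvc).continuousOn
    have hC' : ∀ r ∈ Set.Icc τ T, csM ψ σ τ x v r ≤ C := by
      intro r hr
      exact (le_abs_self _).trans (hC r hr)
    have hC0 : 0 ≤ C := (norm_nonneg _).trans (hC τ ⟨le_rfl, hτT⟩)
    set clamp : ℝ → ℝ := fun s => max (min s T) τ with hclamp
    have hclampLip : LipschitzWith 1 clamp := (LipschitzWith.id.min_const T).max_const τ
    have hclmem : ∀ s, clamp s ∈ Set.Icc τ T := by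
      intro s
      constructor
      · exact le_max_right _ _
      · exact max_le (min_le_right _ _) hτT
    set h : ℝ → ℝ := fun s => csDiam v (clamp s) with hh
    have hLip : LipschitzWith (Real.toNNReal (2*C)) h := by
      apply LipschitzWith.of_dist_le_mul
      intro s s'
      rw [Real.dist_eq, Real.dist_eq]
      have o1 := dv_lip_onesided hσ hστ hτ hψcont hxc hvc hvder hode hτ hC'
        (hclmem s) (hclmem s')
      have o2 := dv_lip_onesided hσ hστ hτ hψcont hxc hvc hvder hode hτ hC'
        (hclmem s') (hclmem s)
      rw [abs_sub_comm (clamp s') (clamp s)] at o2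
      have hcl : |clamp s - clamp s'| ≤ |s - s'| := by
        have := hclampLip.dist_le_mul s s'
        rw [Real.dist_eq, Real.dist_eq] at this
        simpa using this
      have hC2 : (2*C) * |clamp s - clamp s'| ≤ (2*C) * |s - s'| :=
        mul_le_mul_of_nonneg_left hcl (by linarith)
      have habs : |h s - h s'| ≤ 2 * C * |s - s'| := by
        rw [abs_sub_le_iff]
        constructor <;> [skip; skip] <;> simp only [hh] <;> nlinarith [abs_nonneg (s - s')]
      refine habs.trans ?_
      apply mul_le_mul_of_nonneg_right _ (abs_nonneg _)
      exact Real.le_coe_toNNReal _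
    have hae := hLip.ae_differentiableAt (μ := (volume : Measure ℝ))
    filter_upwards [hae] with t ht hto
    have hev : h =ᶠ[nhds t] csDiam v := by
      filter_upwards [isOpen_Ioo.mem_nhds hto] with u hu
      have h1 : min u T = u := min_eq_left hu.2.le
      have h2 : clamp u = u := by
        rw [hclamp]
        simp only [h1]
        exact max_eq_left hu.1.le
      simp [hh, h2]
    exact (Filter.EventuallyEq.differentiableAt_iff hev).mp ht
  have hall := (MeasureTheory.ae_all_iff).2 main
  filter_upwards [hall] with t ht hmem
  obtain ⟨n, hn⟩ := exists_nat_gt (t - τ)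
  refine ht n ⟨?_, ?_⟩
  · have : 0 < τ := hτ
    simp only [Set.mem_Ioi] at hmem
    linarith
  · linarith

end Main3

section Main4
set_option maxHeartbeats 2000000

variable {N d : ℕ} [NeZero N]
variable {ψ : ℝ → ℝ} {σ τ β : ℝ} {x v v' : Fin N → ℝ → EuclideanSpace ℝ (Fin d)}
variable (hN : 2 ≤ N)
variable (hσ : 0 ≤ σ) (hστ : σ ≤ τ) (hτ : 0 < τ)
variable (hψpos : ∀ s, 0 ≤ s → 0 < ψ s)
variable (hψcont : ContinuousOn ψ (Set.Ici 0))
variable (hψbdd : ∀ s, 0 ≤ s → ψ s ≤ 1)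
variable (hxc : ∀ i, ContinuousOn (x i) (Set.Ici (-τ)))
variable (hvc : ∀ i, ContinuousOn (v i) (Set.Ici (-τ)))
variable (hvder : ∀ i, ∀ t > (0:ℝ), HasDerivAt (v i) (v' i t) t)
variable (hode : ∀ i, ∀ t > (0:ℝ),
      v' i t = ∑ j ∈ Finset.univ.erase i,
        (ψ ‖x i (t - σ) - x j (t - τ)‖ / ((N:ℝ) - 1)) • (v j (t - τ) - v i (t - σ)))

include hN hσ hστ hτ hψpos hψcont hψbdd hxc hvc hvder hode

lemma dv_deriv_le {t : ℝ} (ht : 2*τ < t) (hdiff : DifferentiableAt ℝ (csDiam v) t) :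
    deriv (csDiam v) t ≤ -(((N:ℝ) - 1) * csAMin ψ σ τ x t * csDiam v t)
      + 4 * (csW ψ σ τ x v t - csW ψ σ τ x v (t - τ)) := by
  have htpos : (0:ℝ) < t := by linarith
  have htτ : 0 < t - τ := by linarith
  set A : ℝ := csW ψ σ τ x v t - csW ψ σ τ x v (t - τ) with hA
  have hA0 : 0 ≤ A := by
    have := csW_mono hσ hστ hτ hψcont hxc hvc (by linarith : t - τ ≤ t)
    rw [hA]; linarith
  have ha0 : 0 ≤ csAMin ψ σ τ x t := amin_nonneg hN hψpos t
  set a : ℝ := csAMin ψ σ τ x t with haa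
  rcases eq_or_lt_of_le (csDiam_nonneg v t) with h0 | hT
  · -- zero diameter case
    have hmin : IsLocalMin (csDiam v) t := by
      apply Filter.Eventually.of_forall
      intro u
      rw [← h0]
      exact csDiam_nonneg v u
    rw [hmin.deriv_eq_zero, ← h0]
    nlinarith
  -- positive diameter case
  obtain ⟨p, q, hpq⟩ := csDiam_attain v t
  set T : ℝ := csDiam v t with hTT
  set f : ℝ → EuclideanSpace ℝ (Fin d) := fun s => v p s - v q s with hf
  have hfnorm : ‖f t‖ = T := hpq.symm
  have hfne : f t ≠ 0 := by
    intro h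
    rw [h] at hfnorm
    simp at hfnorm
    rw [← hfnorm] at hT
    exact lt_irrefl _ hT
  have hfd : HasDerivAt f (v' p t - v' q t) t := (hvder p t htpos).sub (hvder q t htpos)
  have hgd : DifferentiableAt ℝ (fun s => ‖f s‖) t := hfd.differentiableAt.norm ℝ hfne
  set δg : ℝ := deriv (fun s => ‖f s‖) t with hδg
  have hgder : HasDerivAt (fun s => ‖f s‖) δg t := hgd.hasDerivAt
  have hmin : IsLocalMin (fun s => csDiam v s - ‖f s‖) t := by
    apply Filter.Eventually.of_forall
    intro u
    simp only
    have h1 : ‖f u‖ ≤ csDiam v u := le_csDiam v u p q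
    have h2 : csDiam v t - ‖f t‖ = 0 := by rw [hfnorm, ← hTT, sub_self]
    rw [h2]
    linarith
  have hzero : deriv (csDiam v) t - δg = 0 :=
    hmin.hasDerivAt_eq_zero (hdiff.hasDerivAt.sub hgder)
  -- identify δg
  set Δ : EuclideanSpace ℝ (Fin d) := v' p t - v' q t with hΔ
  have hsq1 : HasDerivAt (fun s => (⟪f s, f s⟫ : ℝ)) (⟪f t, Δ⟫ + ⟪Δ, f t⟫) t :=
    HasDerivAt.inner ℝ hfd hfd
  have hsq2 : HasDerivAt (fun s => ‖f s‖ * ‖f s‖) (δg * ‖f t‖ + ‖f t‖ * δg) t :=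
    hgder.mul hgder
  have funeq : (fun s => (⟪f s, f s⟫ : ℝ)) = fun s => ‖f s‖ * ‖f s‖ := by
    funext s
    exact real_inner_self_eq_norm_mul_norm (f s)
  rw [funeq] at hsq1
  have huniq : ⟪f t, Δ⟫ + ⟪Δ, f t⟫ = δg * ‖f t‖ + ‖f t‖ * δg := hsq1.unique hsq2
  rw [real_inner_comm Δ (f t), hfnorm] at huniq
  have hδgval : δg * T = ⟪f t, Δ⟫ := by linarith [huniq, mul_comm δg T, real_inner_comm Δ (f t), real_inner_comm (f t) Δ]
  -- the key inner product estimate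
  have hφpmax : ∀ j, ⟪f t, v j t⟫ ≤ ⟪f t, v p t⟫ := by
    intro j
    have h1 : ⟪f t, v j t - v q t⟫ ≤ T * T := by
      calc ⟪f t, v j t - v q t⟫ ≤ ‖f t‖ * ‖v j t - v q t‖ := real_inner_le_norm _ _
        _ ≤ T * T := by
            rw [hfnorm]
            exact mul_le_mul_of_nonneg_left (le_csDiam v t j q) hT.le
    have h2 : ⟪f t, v p t - v q t⟫ = T * T := by
      have : v p t - v q t = f t := rfl
      rw [this, real_inner_self_eq_norm_mul_norm, hfnorm]
    rw [inner_sub_right] at h1 h2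
    linarith
  have hφqmin : ∀ j, ⟪f t, v q t⟫ ≤ ⟪f t, v j t⟫ := by
    intro j
    have h1 : ⟪f t, v p t - v j t⟫ ≤ T * T := by
      calc ⟪f t, v p t - v j t⟫ ≤ ‖f t‖ * ‖v p t - v j t‖ := real_inner_le_norm _ _
        _ ≤ T * T := by
            rw [hfnorm]
            exact mul_le_mul_of_nonneg_left (le_csDiam v t p j) hT.le
    have h2 : ⟪f t, v p t - v q t⟫ = T * T := by
      have : v p t - v q t = f t := rfl
      rw [this, real_inner_self_eq_norm_mul_norm, hfnorm]
    rw [inner_sub_right] at h1 h2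
    linarith
  -- FTC error bounds
  have herr1 : ∀ j, ‖v j (t - τ) - v j t‖ ≤ A := by
    intro j
    rw [norm_sub_rev]
    rw [hA]
    exact ftc_v hσ hστ hτ hψcont hxc hvc hvder hode htτ (by linarith) j
  have herr2 : ∀ i, ‖v i t - v i (t - σ)‖ ≤ A := by
    intro i
    calc ‖v i t - v i (t - σ)‖ ≤ csW ψ σ τ x v t - csW ψ σ τ x v (t - σ) :=
          ftc_v hσ hστ hτ hψcont hxc hvc hvder hode (by linarith) (by linarith) i
      _ ≤ A := by
          have := csW_mono hσ hστ hτ hψcont hxc hvc (by linarith : t - τ ≤ t - σ)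
          rw [hA]; linarith
  have herr : ∀ i j, ⟪f t, (v j (t - τ) - v j t) + (v i t - v i (t - σ))⟫ ≤ 2 * A * T
      ∧ -(2 * A * T) ≤ ⟪f t, (v j (t - τ) - v j t) + (v i t - v i (t - σ))⟫ := by
    intro i j
    have hb : ‖(v j (t - τ) - v j t) + (v i t - v i (t - σ))‖ ≤ 2 * A := by
      calc ‖(v j (t - τ) - v j t) + (v i t - v i (t - σ))‖
          ≤ ‖v j (t - τ) - v j t‖ + ‖v i t - v i (t - σ)‖ := norm_add_le _ _
        _ ≤ 2 * A := by have := herr1 j; have := herr2 i; linarith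
    constructor
    · calc ⟪f t, (v j (t - τ) - v j t) + (v i t - v i (t - σ))⟫
          ≤ ‖f t‖ * ‖(v j (t - τ) - v j t) + (v i t - v i (t - σ))‖ :=
            real_inner_le_norm _ _
        _ ≤ 2 * A * T := by
            rw [hfnorm]
            nlinarith
    · have h1 := real_inner_le_norm (f t) (-((v j (t - τ) - v j t) + (v i t - v i (t - σ))))
      rw [inner_neg_right, norm_neg] at h1
      have h2 : ‖f t‖ * ‖(v j (t - τ) - v j t) + (v i t - v i (t - σ))‖ ≤ 2 * A * T := by
        rw [hfnorm]; nlinarith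
      linarith
  -- coefficient notation
  have hdecomp : ∀ i j : Fin N, v j (t - τ) - v i (t - σ)
      = (v j t - v i t) + ((v j (t - τ) - v j t) + (v i t - v i (t - σ))) := by
    intro i j; abel
  -- upper bound for inner with v' p t
  have hsump : ⟪f t, v' p t⟫ ≤
      a * (∑ j ∈ Finset.univ.erase p, (⟪f t, v j t⟫ - ⟪f t, v p t⟫)) + 2 * A * T := by
    rw [hode p t htpos, inner_sum]
    have hterm : ∀ j ∈ Finset.univ.erase p,
        ⟪f t, (ψ ‖x p (t - σ) - x j (t - τ)‖ / ((N:ℝ) - 1)) • (v j (t - τ) - v p (t - σ))⟫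
          ≤ a * (⟪f t, v j t⟫ - ⟪f t, v p t⟫)
            + (ψ ‖x p (t - σ) - x j (t - τ)‖ / ((N:ℝ) - 1)) * (2 * A * T) := by
      intro j hj
      have hjp : j ≠ p := Finset.ne_of_mem_erase hj
      rw [real_inner_smul_right]
      set c : ℝ := ψ ‖x p (t - σ) - x j (t - τ)‖ / ((N:ℝ) - 1) with hc
      have hca : a ≤ c := amin_le hN t hjp.symm
      have hc0 : 0 ≤ c := (coeff_mem hN hψpos hψbdd p j _ _).1
      rw [hdecomp p j, inner_add_right, inner_sub_right]
      have hα : ⟪f t, v j t⟫ - ⟪f t, v p t⟫ ≤ 0 := by have := hφpmax j; linarith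
      have hε := (herr p j).1
      nlinarith
    calc (∑ j ∈ Finset.univ.erase p,
          ⟪f t, (ψ ‖x p (t - σ) - x j (t - τ)‖ / ((N:ℝ) - 1)) • (v j (t - τ) - v p (t - σ))⟫)
        ≤ ∑ j ∈ Finset.univ.erase p, (a * (⟪f t, v j t⟫ - ⟪f t, v p t⟫)
            + (ψ ‖x p (t - σ) - x j (t - τ)‖ / ((N:ℝ) - 1)) * (2 * A * T)) :=
          Finset.sum_le_sum hterm
      _ = a * (∑ j ∈ Finset.univ.erase p, (⟪f t, v j t⟫ - ⟪f t, v p t⟫))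
          + (∑ j ∈ Finset.univ.erase p, ψ ‖x p (t - σ) - x j (t - τ)‖ / ((N:ℝ) - 1))
            * (2 * A * T) := by
          rw [Finset.sum_add_distrib, Finset.mul_sum, Finset.sum_mul]
      _ ≤ a * (∑ j ∈ Finset.univ.erase p, (⟪f t, v j t⟫ - ⟪f t, v p t⟫)) + 1 * (2 * A * T) := by
          apply add_le_add_right
          apply mul_le_mul_of_nonneg_right _ (by nlinarith)
          exact coeff_sum_le_one hN hψpos hψbdd p (t - σ) (fun _ => t - τ)
      _ = a * (∑ j ∈ Finset.univ.erase p, (⟪f t, v j t⟫ - ⟪f t, v p t⟫)) + 2 * A * T := by ring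
  -- lower bound for inner with v' q t
  have hsumq : a * (∑ j ∈ Finset.univ.erase q, (⟪f t, v j t⟫ - ⟪f t, v q t⟫)) - 2 * A * T
      ≤ ⟪f t, v' q t⟫ := by
    rw [hode q t htpos, inner_sum]
    have hterm : ∀ j ∈ Finset.univ.erase q,
        a * (⟪f t, v j t⟫ - ⟪f t, v q t⟫)
            - (ψ ‖x q (t - σ) - x j (t - τ)‖ / ((N:ℝ) - 1)) * (2 * A * T)
          ≤ ⟪f t, (ψ ‖x q (t - σ) - x j (t - τ)‖ / ((N:ℝ) - 1)) • (v j (t - τ) - v q (t - σ))⟫ := by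
      intro j hj
      have hjq : j ≠ q := Finset.ne_of_mem_erase hj
      rw [real_inner_smul_right]
      set c : ℝ := ψ ‖x q (t - σ) - x j (t - τ)‖ / ((N:ℝ) - 1) with hc
      have hca : a ≤ c := amin_le hN t hjq.symm
      have hc0 : 0 ≤ c := (coeff_mem hN hψpos hψbdd q j _ _).1
      rw [hdecomp q j, inner_add_right, inner_sub_right]
      have hα : 0 ≤ ⟪f t, v j t⟫ - ⟪f t, v q t⟫ := by have := hφqmin j; linarith
      have hε := (herr q j).2
      nlinarith
    calc a * (∑ j ∈ Finset.univ.erase q, (⟪f t, v j t⟫ - ⟪f t, v q t⟫)) - 2 * A * T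
        ≤ a * (∑ j ∈ Finset.univ.erase q, (⟪f t, v j t⟫ - ⟪f t, v q t⟫))
          - (∑ j ∈ Finset.univ.erase q, ψ ‖x q (t - σ) - x j (t - τ)‖ / ((N:ℝ) - 1))
            * (2 * A * T) := by
          have h1 : (∑ j ∈ Finset.univ.erase q, ψ ‖x q (t - σ) - x j (t - τ)‖ / ((N:ℝ) - 1))
              * (2 * A * T) ≤ 1 * (2 * A * T) := by
            apply mul_le_mul_of_nonneg_right _ (by nlinarith)
            exact coeff_sum_le_one hN hψpos hψbdd q (t - σ) (fun _ => t - τ)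
          linarith
      _ = ∑ j ∈ Finset.univ.erase q, (a * (⟪f t, v j t⟫ - ⟪f t, v q t⟫)
            - (ψ ‖x q (t - σ) - x j (t - τ)‖ / ((N:ℝ) - 1)) * (2 * A * T)) := by
          rw [Finset.mul_sum, Finset.sum_mul, ← Finset.sum_sub_distrib]
      _ ≤ _ := Finset.sum_le_sum hterm
  -- combine the sums
  have hsum_id : ∀ r : Fin N, (∑ j ∈ Finset.univ.erase r, (⟪f t, v j t⟫ - ⟪f t, v r t⟫))
      = (∑ j : Fin N, ⟪f t, v j t⟫) - (N:ℝ) * ⟪f t, v r t⟫ := by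
    intro r
    rw [Finset.sum_sub_distrib, Finset.sum_const, Finset.card_erase_of_mem (Finset.mem_univ r),
      Finset.card_univ, Fintype.card_fin]
    rw [Finset.sum_erase_eq_sub (Finset.mem_univ r)]
    have hcast : ((N - 1 : ℕ) : ℝ) = (N:ℝ) - 1 := by
      have : 1 ≤ N := by omega
      push_cast [this]; ring
    rw [nsmul_eq_mul, hcast]
    ring
  have hφdiff : ⟪f t, v p t⟫ - ⟪f t, v q t⟫ = T * T := by
    have h2 : ⟪f t, v p t - v q t⟫ = T * T := by
      have : v p t - v q t = f t := rfl
      rw [this, real_inner_self_eq_norm_mul_norm, hfnorm]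
    rw [inner_sub_right] at h2
    linarith
  have hinner : ⟪f t, Δ⟫ ≤ -((N:ℝ) * a * (T * T)) + 4 * A * T := by
    have h1 : ⟪f t, Δ⟫ = ⟪f t, v' p t⟫ - ⟪f t, v' q t⟫ := by
      rw [hΔ, inner_sub_right]
    rw [h1]
    have h2 := hsump
    have h3 := hsumq
    rw [hsum_id p] at h2
    rw [hsum_id q] at h3
    have hkey : a * ((∑ j : Fin N, ⟪f t, v j t⟫) - (N:ℝ) * ⟪f t, v p t⟫)
        - a * ((∑ j : Fin N, ⟪f t, v j t⟫) - (N:ℝ) * ⟪f t, v q t⟫)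
        = -((N:ℝ) * a * (T * T)) := by
      linear_combination (-(N:ℝ) * a) * hφdiff
    linarith
  -- conclude
  have hδeq : deriv (csDiam v) t = δg := by linarith
  rw [hδeq]
  have hNT : ((N:ℝ) - 1) * a * (T * T) ≤ (N:ℝ) * a * (T * T) := by nlinarith
  have hfinal : δg * T ≤ (-(((N:ℝ) - 1) * a * T) + 4 * A) * T := by
    rw [hδgval]
    calc ⟪f t, Δ⟫ ≤ -((N:ℝ) * a * (T * T)) + 4 * A * T := hinner
      _ ≤ (-(((N:ℝ) - 1) * a * T) + 4 * A) * T := by nlinarith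
  have := le_of_mul_le_mul_right hfinal hT
  linarith [this]
end Main4

set_option maxHeartbeats 4000000 in
theorem stmt_12
    (N d : ℕ) (hN : 2 ≤ N) (hd : 1 ≤ d)
    (σ τ : ℝ) (hσ : 0 ≤ σ) (hστ : σ ≤ τ) (hτ : 0 < τ)
    (β : ℝ) (hβ : 0 < β)
    (hβτ : 0 ≤ 2 * β * Real.exp (-(2 * τ)) - 4 * τ - β)
    (ψ : ℝ → ℝ)
    (hψpos : ∀ s, 0 ≤ s → 0 < ψ s)
    (hψcont : ContinuousOn ψ (Set.Ici 0))
    (hψmono : ∀ s t, 0 ≤ s → s ≤ t → ψ t ≤ ψ s)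
    (hψbdd : ∀ s, 0 ≤ s → ψ s ≤ 1)
    (x v v' : Fin N → ℝ → EuclideanSpace ℝ (Fin d))
    (hxc : ∀ i, ContinuousOn (x i) (Set.Ici (-τ)))
    (hvc : ∀ i, ContinuousOn (v i) (Set.Ici (-τ)))
    (hxder : ∀ i, ∀ t, -τ < t → HasDerivAt (x i) (v i t) t)
    (hvder : ∀ i, ∀ t > (0:ℝ), HasDerivAt (v i) (v' i t) t)
    (hode : ∀ i, ∀ t > (0:ℝ),
      v' i t = ∑ j ∈ Finset.univ.erase i,
        (ψ ‖x i (t - σ) - x j (t - τ)‖ / (N - 1)) • (v j (t - τ) - v i (t - σ))) :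
    ∀ᵐ t ∂(volume : Measure ℝ), t ∈ Set.Ioi (2 * τ) →
      ∃ D : ℝ, HasDerivAt (csG β τ v v') D t ∧
        D ≤ 4 * (∫ s in (t - τ)..t, csG β τ v v' (s - τ))
          - (N - 1) * csAMin ψ σ τ x t * csG β τ v v' t
          + β * (1 - Real.exp (-(2 * τ))) * csG β τ v v' (t - τ) := by
  haveI : NeZero N := ⟨by omega⟩
  have hdae := dv_ae_diff (v' := v') hσ hστ hτ hψcont hxc hvc hvder hode
  filter_upwards [hdae] with t hdiff' ht
  have ht' : 2 * τ < t := ht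
  have hdiff : DifferentiableAt ℝ (csDiam v) t := hdiff' ht
  clear hdiff' ht hdae
  set E2 : ℝ := Real.exp (-(2 * τ)) with hE2
  have hE2pos : 0 < E2 := Real.exp_pos _
  have hE2lt1 : E2 < 1 := by
    rw [hE2]
    apply Real.exp_lt_one_iff.mpr
    linarith
  set k1 : ℝ := β * (1 - E2) with hk1
  set k2 : ℝ := β * E2 with hk2
  have hk1pos : 0 ≤ k1 := by
    apply mul_nonneg hβ.le
    linarith
  have hk2pos : 0 < k2 := mul_pos hβ hE2pos
  -- shorthand
  set W := csW ψ σ τ x v with hW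
  set Hh := csH ψ σ τ x v with hHh
  set M := csM ψ σ τ x v with hM
  set dv := csDiam v with hdv
  set a : ℝ := csAMin ψ σ τ x t with haa
  -- derivative of the explicit local representative
  have hWd : HasDerivAt W (M t) t := csW_hasDeriv hσ hστ hτ hψcont hxc hvc t
  have hHd : HasDerivAt Hh (Real.exp t * W t) t := csH_hasDeriv hσ hστ hτ hψcont hxc hvc t
  have hHτd : HasDerivAt (fun u => Hh (u - 2*τ)) (Real.exp (t - 2*τ) * W (t - 2*τ)) t := by
    have h := (csH_hasDeriv hσ hστ hτ hψcont hxc hvc (t - 2*τ)).comp t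
      ((hasDerivAt_id t).sub_const (2*τ))
    simpa [Function.comp_def] using h
  have hEd : HasDerivAt (fun u : ℝ => Real.exp (-u)) (-Real.exp (-t)) t := by
    have h := (Real.hasDerivAt_exp (-t)).comp t (hasDerivAt_neg t)
    simpa [Function.comp_def] using h
  have hP : HasDerivAt (fun u => Real.exp (-u) * (Hh u - Hh (u - 2*τ)))
      ((-Real.exp (-t)) * (Hh t - Hh (t - 2*τ)) +
        Real.exp (-t) * (Real.exp t * W t - Real.exp (t - 2*τ) * W (t - 2*τ))) t :=
    hEd.mul (hHd.sub hHτd)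
  set D0 : ℝ := deriv dv t + β * (M t * (1 - E2) -
      ((-Real.exp (-t)) * (Hh t - Hh (t - 2*τ)) +
        Real.exp (-t) * (Real.exp t * W t - Real.exp (t - 2*τ) * W (t - 2*τ)))) with hD0
  have hΨ : HasDerivAt (fun u => dv u + β * (W u * (1 - E2) -
      Real.exp (-u) * (Hh u - Hh (u - 2*τ)))) D0 t :=
    hdiff.hasDerivAt.add (((hWd.mul_const (1 - E2)).sub hP).const_mul β)
  -- csG agrees with the local representative near t
  have hev : csG β τ v v' =ᶠ[nhds t] (fun u => dv u + β * (W u * (1 - E2) -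
      Real.exp (-u) * (Hh u - Hh (u - 2*τ)))) := by
    filter_upwards [isOpen_Ioi.mem_nhds ht'] with u hu
    have hu' : 2 * τ < u := hu
    have hu0 : (0:ℝ) ≤ u := by linarith
    rw [csG_eq hσ hστ hτ hψcont hxc hvc hode hu0]
    congr 1
    unfold csFe
    have hmax : max 0 (u - 2*τ) = u - 2*τ := max_eq_right (by linarith)
    rw [hmax]
    have harg : u - 2*τ - u = -(2*τ) := by ring
    rw [harg, ← hE2, ← hW, ← hHh]
  have hG : HasDerivAt (csG β τ v v') D0 t := hΨ.congr_of_eventuallyEq hev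
  refine ⟨D0, hG, ?_⟩
  -- now the estimate
  have htpos : (0:ℝ) < t := by linarith
  set A : ℝ := W t - W (t - τ) with hA
  set B : ℝ := W (t - τ) - W (t - 2*τ) with hB
  have hA0 : 0 ≤ A := by
    have := csW_mono hσ hστ hτ hψcont hxc hvc (by linarith : t - τ ≤ t)
    rw [hA, hW]; linarith
  have hB0 : 0 ≤ B := by
    have := csW_mono hσ hστ hτ hψcont hxc hvc (by linarith : t - 2*τ ≤ t - τ)
    rw [hB, hW]; linarith
  set Fet : ℝ := csFe ψ σ τ β x v t with hFet
  have hFeteq : Fet = β * (W t * (1 - E2) - Real.exp (-t) * (Hh t - Hh (t - 2*τ))) := by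
    rw [hFet]
    unfold csFe
    have hmax : max 0 (t - 2*τ) = t - 2*τ := max_eq_right (by linarith)
    rw [hmax]
    have harg : t - 2*τ - t = -(2*τ) := by ring
    rw [harg, ← hE2, ← hW, ← hHh]
  have hFet0 : 0 ≤ Fet := by
    rw [hFet]
    exact csFe_nonneg hσ hστ hτ hψcont hxc hvc hβ.le (by linarith)
  -- rewrite D0 in convenient form
  have e1 : Real.exp (-t) * Real.exp t = 1 := by
    rw [← Real.exp_add]; simp
  have e2 : Real.exp (-t) * Real.exp (t - 2*τ) = E2 := by
    rw [hE2, ← Real.exp_add]; congr 1; ring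
  have hraw : D0 = deriv dv t + k1 * M t - Fet - k2 * A - k2 * B := by
    rw [hD0, hFeteq, hk1, hk2, hA, hB]
    linear_combination (-(β * W t)) * e1 + (β * W (t - 2*τ)) * e2
  -- the pieces
  have hδle : deriv dv t ≤ -(((N:ℝ) - 1) * a * dv t) + 4 * A := by
    rw [hA, hW, hdv, haa]
    exact dv_deriv_le hN hσ hστ hτ hψpos hψcont hψbdd hxc hvc hvder hode ht' hdiff
  have hMle : M t ≤ dv (t - τ) + A := by
    rw [hM, hA, hW, hdv]
    exact csM_le hN hσ hστ hτ hψpos hψcont hψbdd hxc hvc hvder hode (by linarith)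
  -- csG values
  have hGt : csG β τ v v' t = dv t + Fet := by
    rw [hFet, hdv]
    exact csG_eq hσ hστ hτ hψcont hxc hvc hode (by linarith)
  have hGtτ : csG β τ v v' (t - τ) = dv (t - τ) + csFe ψ σ τ β x v (t - τ) := by
    rw [hdv]
    exact csG_eq hσ hστ hτ hψcont hxc hvc hode (by linarith)
  have hFetτ0 : 0 ≤ csFe ψ σ τ β x v (t - τ) :=
    csFe_nonneg hσ hστ hτ hψcont hxc hvc hβ.le (by linarith)
  have hdvτle : dv (t - τ) ≤ csG β τ v v' (t - τ) := by rw [hGtτ]; linarith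
  -- integrals
  have hcontdv : ContinuousOn (fun r => dv (r - τ)) (Set.Icc (t - τ) t) := by
    rw [hdv]
    apply (csDiam_contOn hvc).comp
    · exact (continuous_id.sub continuous_const).continuousOn
    · intro r hr
      simp only [Set.mem_Ici]
      have := hr.1
      simp only [Set.mem_Icc] at hr
      linarith [hr.1]
  have hcontG : ContinuousOn (fun r => csFe ψ σ τ β x v (r - τ)) (Set.Icc (t - τ) t) :=
    ((csFe_cont hσ hστ hτ hψcont hxc hvc).comp
      (continuous_id.sub continuous_const)).continuousOn
  set Dint : ℝ := ∫ s in (t - τ)..t, dv (s - τ) with hDint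
  set Feint : ℝ := ∫ s in (t - τ)..t, csFe ψ σ τ β x v (s - τ) with hFeint
  have hG_split : (∫ s in (t - τ)..t, csG β τ v v' (s - τ)) = Dint + Feint := by
    rw [hDint, hFeint, ← intervalIntegral.integral_add
      (hcontdv.intervalIntegrable_of_Icc (by linarith))
      (hcontG.intervalIntegrable_of_Icc (by linarith))]
    apply intervalIntegral.integral_congr
    intro s hs
    rw [Set.uIcc_of_le (by linarith : t - τ ≤ t)] at hs
    simp only
    rw [hdv]
    exact csG_eq hσ hστ hτ hψcont hxc hvc hode (by simp only [Set.mem_Icc] at hs; linarith [hs.1])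
  have hFeint0 : 0 ≤ Feint := by
    rw [hFeint]
    apply intervalIntegral.integral_nonneg (by linarith : t - τ ≤ t)
    intro s hs
    exact csFe_nonneg hσ hστ hτ hψcont hxc hvc hβ.le (by simp only [Set.mem_Icc] at hs; linarith [hs.1])
  -- A ≤ Dint + τ*A + τ*B
  have hAle : A ≤ Dint + τ * A + τ * B := by
    have hWsub : A = ∫ r in (t - τ)..t, M r := by
      rw [hA, hM, hW, csW_sub hσ hστ hτ hψcont hxc hvc]
    have hpt : ∀ r ∈ Set.Icc (t - τ) t, M r ≤ dv (r - τ) + (W r - W (r - τ)) := by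
      intro r hr
      rw [hM, hdv, hW]
      exact csM_le hN hσ hστ hτ hψpos hψcont hψbdd hxc hvc hvder hode
        (by simp only [Set.mem_Icc] at hr; linarith [hr.1])
    have hWc : Continuous W := by rw [hW]; exact csW_cont hσ hστ hτ hψcont hxc hvc
    have hWshiftint : IntervalIntegrable (fun r => W r - W (r - τ)) volume (t - τ) t :=
      ((hWc.sub (hWc.comp (continuous_sub_right τ))).intervalIntegrable _ _)
    have hint1 : (∫ r in (t - τ)..t, M r) ≤
        ∫ r in (t - τ)..t, (dv (r - τ) + (W r - W (r - τ))) := by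
      apply intervalIntegral.integral_mono_on (by linarith)
      · rw [hM]; exact (csM_cont hσ hστ hτ hψcont hxc hvc).intervalIntegrable _ _
      · exact (hcontdv.intervalIntegrable_of_Icc (by linarith)).add hWshiftint
      · exact hpt
    have hint2 : (∫ r in (t - τ)..t, (dv (r - τ) + (W r - W (r - τ))))
        = Dint + ∫ r in (t - τ)..t, (W r - W (r - τ)) := by
      rw [hDint, intervalIntegral.integral_add
        (hcontdv.intervalIntegrable_of_Icc (by linarith)) hWshiftint]
    have hint3 : (∫ r in (t - τ)..t, (W r - W (r - τ))) ≤ ∫ _r in (t - τ)..t, (A + B) := by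
      apply intervalIntegral.integral_mono_on (by linarith)
      · exact hWshiftint
      · exact intervalIntegrable_const
      · intro r hr
        simp only [Set.mem_Icc] at hr
        have h1 : W r ≤ W t := csW_mono hσ hστ hτ hψcont hxc hvc hr.2
        have h2 : W (t - 2*τ) ≤ W (r - τ) :=
          csW_mono hσ hστ hτ hψcont hxc hvc (by linarith [hr.1])
        rw [hA, hB]
        linarith
    have hint4 : (∫ _r in (t - τ)..t, (A + B)) = τ * (A + B) := by
      rw [intervalIntegral.integral_const, smul_eq_mul]
      ring_nf
    rw [hint2] at hint1
    rw [hint4] at hint3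
    rw [← hWsub] at hint1
    have hexp : τ * (A + B) = τ * A + τ * B := by ring
    linarith
  -- final arithmetic
  have ha0 : 0 ≤ a := by rw [haa]; exact amin_nonneg hN hψpos t
  have ha1 : ((N:ℝ) - 1) * a ≤ 1 := by rw [haa]; exact amin_mul_le_one hN hψpos hψbdd t
  have hdvτ0 : 0 ≤ dv (t - τ) := csDiam_nonneg v (t - τ)
  -- product inequalities
  have P1 : k1 * M t ≤ k1 * dv (t - τ) + k1 * A := by
    have h := mul_le_mul_of_nonneg_left hMle hk1pos
    have hexp : k1 * (dv (t - τ) + A) = k1 * dv (t - τ) + k1 * A := by ring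
    linarith
  have P1' : k1 * dv (t - τ) ≤ k1 * csG β τ v v' (t - τ) :=
    mul_le_mul_of_nonneg_left hdvτle hk1pos
  have P2 : (((N:ℝ) - 1) * a) * Fet ≤ Fet := mul_le_of_le_one_left hFet0 ha1
  have P3 : (((N:ℝ) - 1) * a) * csG β τ v v' t
      = ((N:ℝ) - 1) * a * dv t + (((N:ℝ) - 1) * a) * Fet := by
    rw [hGt]; ring
  -- combine coefficients on A and B
  have hβτ' : 0 ≤ 2 * k2 - 4 * τ - β := by rw [hk2, hE2]; linarith [hβτ]
  have hk2β : k2 ≤ β := by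
    have h1 : k1 = β - k2 := by rw [hk1, hk2]; ring
    linarith [hk1pos]
  have h4τ : 4 * τ ≤ k2 := by linarith
  have hcle : 4 + k1 - k2 ≤ 4 - 4 * τ := by
    have : k1 = β - k2 := by rw [hk1, hk2]; ring
    linarith
  have hcA : (4 + k1 - k2) * A ≤ (4 - 4*τ) * A := mul_le_mul_of_nonneg_right hcle hA0
  have hA4 : (4 - 4*τ) * A ≤ 4 * Dint + 4 * (τ * B) := by
    have hexp : (4 - 4*τ) * A = 4 * A - 4 * (τ * A) := by ring
    linarith [hAle]
  have hτB : 4 * (τ * B) ≤ k2 * B := by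
    have h := mul_le_mul_of_nonneg_right h4τ hB0
    have hexp : (4 * τ) * B = 4 * (τ * B) := by ring
    linarith
  have hDG : Dint ≤ Dint + Feint := by linarith
  -- assemble
  rw [hraw, hG_split]
  have hexp1 : (4 + k1 - k2) * A = 4 * A + k1 * A - k2 * A := by ring
  have hexp2 : (4 - 4*τ) * A = 4 * A - 4 * (τ * A) := by ring
  linarith [hδle, P1, P1', P2, P3, hcA, hA4, hτB, hFeint0, hA0, hB0]
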